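/- Let f : ℝ⁴ → ℝ be given by f(x,u,p,q) = (3/2)·q²/p on the open set where p ≠ 0. Then the relative invariant I₂ = f_{qq}² + 6 f_{pqq} equals −9/p² at every point of this set; in particular I₂ does not vanish anywhere on this set. -/

import Mathlib

/-- Partial derivative with respect to the first variable `x`. -/
noncomputable def pX (g : ℝ → ℝ → ℝ → ℝ → ℝ) (x u p q : ℝ) : ℝ :=
  deriv (fun t => g t u p q) x

/-- Partial derivative with respect to the second variable `u`. -/
noncomputable def pU (g : ℝ → ℝ → ℝ → ℝ → ℝ) (x u p q : ℝ) : ℝ :=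
  deriv (fun t => g x t p q) u

/-- Partial derivative with respect to the third variable `p`. -/
noncomputable def pP (g : ℝ → ℝ → ℝ → ℝ → ℝ) (x u p q : ℝ) : ℝ :=
  deriv (fun t => g x u t q) p

/-- Partial derivative with respect to the fourth variable `q`. -/
noncomputable def pQ (g : ℝ → ℝ → ℝ → ℝ → ℝ) (x u p q : ℝ) : ℝ :=
  deriv (fun t => g x u p t) q

/-- The total derivative operator
`D_x = ∂/∂x + p ∂/∂u + q ∂/∂p + f ∂/∂q` associated with the ODE `u''' = f`. -/
noncomputable def Dx (f g : ℝ → ℝ → ℝ → ℝ → ℝ) : ℝ → ℝ → ℝ → ℝ → ℝ :=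
  fun x u p q =>
    pX g x u p q + p * pU g x u p q + q * pP g x u p q + f x u p q * pQ g x u p q

/-- The right hand side of the nonlinear ODE of Example 3.3: `u''' = (3/2)u''²/u'`. -/
noncomputable def f : ℝ → ℝ → ℝ → ℝ → ℝ := fun _x _u p q => (3 / 2) * q ^ 2 / p

lemma pQ_f : pQ f = fun _x _u p q => 3 * q / p := by
  funext x u p q
  unfold pQ f
  rw [show (fun t : ℝ => 3 / 2 * t ^ 2 / p) = fun t : ℝ => (3 / (2 * p)) * t ^ 2 by
    funext t; ring]
  rw [deriv_const_mul _ (differentiable_pow 2).differentiableAt, deriv_pow_field]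
  ring

lemma pQQ_f : pQ (pQ f) = fun _x _u p _q => 3 / p := by
  funext x u p q
  rw [pQ_f]
  unfold pQ
  rw [show (fun t : ℝ => 3 * t / p) = fun t : ℝ => (3 / p) * t by funext t; ring]
  rw [deriv_const_mul _ differentiableAt_fun_id]
  simp

/-- For `f(x,u,p,q) = (3/2)q²/p` of Example 3.3, the relative invariant
`I₂ = f_qq² + 6 f_pqq` equals `−9/p²` on the set `p ≠ 0`; in particular it is
nowhere zero there. -/
theorem I2_nonzero_example3 :
    ∀ x u p q : ℝ, p ≠ 0 →
      (pQ (pQ f) x u p q) ^ 2 + 6 * pP (pQ (pQ f)) x u p q = -9 / p ^ 2 ∧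
      (pQ (pQ f) x u p q) ^ 2 + 6 * pP (pQ (pQ f)) x u p q ≠ 0 := by
  intro x u p q hp
  have hpp : pP (pQ (pQ f)) x u p q = -3 / p ^ 2 := by
    rw [pQQ_f]
    unfold pP
    rw [show (fun t : ℝ => 3 / t) = fun t : ℝ => 3 * t⁻¹ by funext t; ring]
    rw [deriv_const_mul _ (differentiableAt_inv hp), deriv_inv]
    field_simp
  have heq : ((fun (_x _u : ℝ) (p : ℝ) (_q : ℝ) => 3 / p) x u p q) ^ 2 + 6 * (-3 / p ^ 2) = -9 / p ^ 2 := by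
    field_simp; ring
  rw [hpp, pQQ_f, heq]
  exact ⟨rfl, by
    intro h
    apply hp
    have := div_ne_zero (by norm_num : (-9:ℝ) ≠ 0) (pow_ne_zero 2 hp)
    exact absurd h this⟩
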